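/- For every n, the polynomial p_n(q) = Σ_{π plane partition of n} q^{w_+(π) − w_−(π)} (a Laurent polynomial in q) is symmetric under q ↦ q^{−1}, i.e. p_n(q) = p_n(q^{−1}). -/
import Mathlib


/-- A plane partition: a finitely supported array of naturals,
weakly decreasing in both directions. -/
structure PlanePartition where
  toFun : ℕ → ℕ → ℕ
  finite_supp : {p : ℕ × ℕ | toFun p.1 p.2 ≠ 0}.Finite
  dec_right : ∀ i j, toFun i (j + 1) ≤ toFun i j
  dec_down : ∀ i j, toFun (i + 1) j ≤ toFun i j

/-- The size `|π| = Σ_{i,j} π_{i,j}`. -/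
noncomputable def PlanePartition.size (π : PlanePartition) : ℕ :=
  ∑ᶠ p : ℕ × ℕ, π.toFun p.1 p.2

/-- `w₊(π) = Σ_{i<j} π_{i,j}`. -/
noncomputable def PlanePartition.wplus (π : PlanePartition) : ℕ :=
  ∑ᶠ p : ℕ × ℕ, if p.1 < p.2 then π.toFun p.1 p.2 else 0

/-- `w₋(π) = Σ_{i>j} π_{i,j}`. -/
noncomputable def PlanePartition.wminus (π : PlanePartition) : ℕ :=
  ∑ᶠ p : ℕ × ℕ, if p.2 < p.1 then π.toFun p.1 p.2 else 0

/-- `w₀(π) = Σ_i π_{i,i}`. -/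
noncomputable def PlanePartition.w0 (π : PlanePartition) : ℕ :=
  ∑ᶠ i : ℕ, π.toFun i i

/-- The transpose of a plane partition. -/
noncomputable def PlanePartition.transpose (π : PlanePartition) : PlanePartition where
  toFun i j := π.toFun j i
  finite_supp := by
    have := (π.finite_supp.image (Equiv.prodComm ℕ ℕ))
    refine this.subset ?_
    rintro ⟨i, j⟩ h
    exact ⟨(j, i), h, rfl⟩
  dec_right i j := π.dec_down j i
  dec_down i j := π.dec_right j i

@[ext] theorem PlanePartition.ext {π σ : PlanePartition} (h : π.toFun = σ.toFun) : π = σ := by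
  cases π; cases σ; simpa using h

theorem PlanePartition.transpose_transpose (π : PlanePartition) :
    π.transpose.transpose = π := by ext; rfl

theorem PlanePartition.size_transpose (π : PlanePartition) :
    π.transpose.size = π.size := by
  unfold PlanePartition.size
  exact finsum_comp_equiv (Equiv.prodComm ℕ ℕ) (f := fun p : ℕ × ℕ => π.toFun p.1 p.2)

theorem PlanePartition.wplus_transpose (π : PlanePartition) :
    π.transpose.wplus = π.wminus := by
  unfold PlanePartition.wplus PlanePartition.wminus
  exact finsum_comp_equiv (Equiv.prodComm ℕ ℕ)
    (f := fun p : ℕ × ℕ => if p.2 < p.1 then π.toFun p.1 p.2 else 0)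

theorem PlanePartition.wminus_transpose (π : PlanePartition) :
    π.transpose.wminus = π.wplus := by
  unfold PlanePartition.wplus PlanePartition.wminus
  exact finsum_comp_equiv (Equiv.prodComm ℕ ℕ)
    (f := fun p : ℕ × ℕ => if p.1 < p.2 then π.toFun p.1 p.2 else 0)

/-- The generating Laurent polynomial `p_n(q) = Σ_{|π| = n} q^{w₊(π) - w₋(π)}`
is symmetric under `q ↦ q⁻¹`. -/
theorem pn_symmetric (n : ℕ) (S : Finset PlanePartition)
    (hS : ∀ π : PlanePartition, π ∈ S ↔ π.size = n) (q : ℚ) (hq : q ≠ 0) :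
    ∑ π ∈ S, q ^ ((π.wplus : ℤ) - (π.wminus : ℤ)) =
      ∑ π ∈ S, q⁻¹ ^ ((π.wplus : ℤ) - (π.wminus : ℤ)) := by
  have key : ∀ π : PlanePartition,
      q⁻¹ ^ ((π.wplus : ℤ) - (π.wminus : ℤ)) = q ^ ((π.wminus : ℤ) - (π.wplus : ℤ)) := by
    intro π
    rw [inv_zpow, ← zpow_neg, neg_sub]
  simp_rw [key]
  refine Finset.sum_nbij' (fun π => π.transpose) (fun π => π.transpose) ?_ ?_ ?_ ?_ ?_
  · intro π hπ
    rw [hS] at hπ ⊢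
    rw [PlanePartition.size_transpose]; exact hπ
  · intro π hπ
    rw [hS] at hπ ⊢
    rw [PlanePartition.size_transpose]; exact hπ
  · intro π _; exact π.transpose_transpose
  · intro π _; exact π.transpose_transpose
  · intro π _
    rw [PlanePartition.wplus_transpose, PlanePartition.wminus_transpose]
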